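/- arXiv:1811.00892 — 4 statements merged into one kernel-verified Lean document; each statement's English description precedes it below -/
import Mathlib

section
/- Suppose each disutility function c_i is strictly convex and continuously differentiable (Assumption 1) and the OLC problem is feasible (Assumption 2). If (ω*, d*, P*, ψ*) is an optimal solution of the reformulated OLC problem, then ω*_i = 0 for all i ∈ N. -/
open Finset

/-- Net outflow of the line quantity `P` at bus `i` over the line set `Es`:
`∑_{j : ij ∈ Es} P_ij − ∑_{k : ki ∈ Es} P_ki`. -/
noncomputable def netOut {N : Type*} [DecidableEq N]
    (Es : Finset (N × N)) (P : N × N → ℝ) (i : N) : ℝ :=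
  (∑ e ∈ Es.filter (fun e => e.1 = i), P e) -
    ∑ e ∈ Es.filter (fun e => e.2 = i), P e

/-- Feasibility for the OLC problem (3). -/
def OLCFeasible {N : Type*} [Fintype N] [DecidableEq N]
    (E Ein : Finset (N × N)) (B : N × N → ℝ) (Pin dlo dhi : N → ℝ)
    (Plo Phi : N × N → ℝ) (d θ : N → ℝ) : Prop :=
  (∀ i, d i = Pin i - netOut Ein (fun e => B e * (θ e.1 - θ e.2)) i) ∧
  (∀ i, dlo i ≤ d i ∧ d i ≤ dhi i) ∧
  (∀ e ∈ E, Plo e ≤ B e * (θ e.1 - θ e.2) ∧ B e * (θ e.1 - θ e.2) ≤ Phi e)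

/-- Feasibility for the reformulated OLC problem (4). -/
def ReformFeasible {N : Type*} [Fintype N] [DecidableEq N]
    (E Ein : Finset (N × N)) (B : N × N → ℝ) (D Pin dlo dhi : N → ℝ)
    (Plo Phi : N × N → ℝ) (d ω : N → ℝ) (P : N × N → ℝ) (ψ : N → ℝ) : Prop :=
  (∀ i, d i = Pin i - D i * ω i - netOut E P i) ∧
  (∀ i, dlo i ≤ d i ∧ d i ≤ dhi i) ∧
  (∀ i, d i = Pin i - netOut Ein (fun e => B e * (ψ e.1 - ψ e.2)) i) ∧
  (∀ e ∈ E, Plo e ≤ B e * (ψ e.1 - ψ e.2) ∧ B e * (ψ e.1 - ψ e.2) ≤ Phi e)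

/-- first half of Lemma 1: under Assumptions 1 and 2, any optimal solution
`(ω*, d*, P*, ψ*)` of the reformulated OLC problem has `ω*_i = 0` for all buses `i`. -/
theorem optimal_reform_frequency_zero
    {N : Type*} [Fintype N] [DecidableEq N]
    (E Ein : Finset (N × N)) (hEin : Ein ⊆ E)
    (B : N × N → ℝ) (hB : ∀ e ∈ E, 0 < B e)
    (D Pin dlo dhi : N → ℝ) (hD : ∀ i, 0 < D i)
    (hdlim : ∀ i, dlo i ≤ dhi i)
    (Plo Phi : N × N → ℝ) (hPlim : ∀ e ∈ E, Plo e ≤ Phi e)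
    (c : N → ℝ → ℝ)
    -- Assumption 1: each cᵢ is strictly convex and continuously differentiable
    (hconv : ∀ i, StrictConvexOn ℝ Set.univ (c i))
    (hdiff : ∀ i, ContDiff ℝ 1 (c i))
    -- Assumption 2: the OLC problem is feasible
    (hfeas : ∃ d θ, OLCFeasible E Ein B Pin dlo dhi Plo Phi d θ)
    -- (ω*, d*, P*, ψ*) is an optimal solution of the reformulated OLC problem
    (ωs ds : N → ℝ) (Ps : N × N → ℝ) (ψs : N → ℝ)
    (hfeass : ReformFeasible E Ein B D Pin dlo dhi Plo Phi ds ωs Ps ψs)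
    (hopt : ∀ d ω P ψ, ReformFeasible E Ein B D Pin dlo dhi Plo Phi d ω P ψ →
      (∑ i, c i (ds i)) + (1/2) * ∑ i, D i * (ωs i) ^ 2 ≤
        (∑ i, c i (d i)) + (1/2) * ∑ i, D i * (ω i) ^ 2) :
    ∀ i, ωs i = 0 := by
  classical
  set P' : N × N → ℝ := fun e => if e ∈ Ein then B e * (ψs e.1 - ψs e.2) else 0 with hP'
  obtain ⟨h1, h2, h3, h4⟩ := hfeass
  have hnet : ∀ i, netOut E P' i =
      netOut Ein (fun e => B e * (ψs e.1 - ψs e.2)) i := by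
    intro i
    unfold netOut
    have key : ∀ p : N × N → Prop, ∀ _ : DecidablePred p,
        (∑ e ∈ E.filter p, P' e) = ∑ e ∈ Ein.filter p, B e * (ψs e.1 - ψs e.2) := by
      intro p hp
      rw [hP']
      rw [Finset.sum_ite_mem]
      congr 1
      ext e
      simp only [Finset.mem_inter, Finset.mem_filter]
      constructor
      · rintro ⟨⟨_, hpe⟩, he⟩; exact ⟨he, hpe⟩
      · rintro ⟨he, hpe⟩; exact ⟨⟨hEin he, hpe⟩, he⟩
    rw [key _ _, key _ _]
  have hfeas' : ReformFeasible E Ein B D Pin dlo dhi Plo Phi ds (fun _ => 0) P' ψs := by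
    refine ⟨fun i => ?_, h2, h3, h4⟩
    rw [hnet i]
    simpa using h3 i
  have hle := hopt ds (fun _ => 0) P' ψs hfeas'
  simp only [ne_eq, OfNat.ofNat_ne_zero, not_false_eq_true, zero_pow, mul_zero,
    Finset.sum_const_zero, mul_zero, add_zero] at hle
  have hsum : (∑ i, D i * (ωs i) ^ 2) ≤ 0 := by
    nlinarith
  have hall : ∀ i ∈ Finset.univ, D i * (ωs i) ^ 2 = 0 := by
    have hnn : ∀ i ∈ (Finset.univ : Finset N), 0 ≤ D i * (ωs i) ^ 2 :=
      fun i _ => mul_nonneg (hD i).le (sq_nonneg _)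
    intro i hi
    have := (Finset.sum_eq_zero_iff_of_nonneg hnn).mp
      (le_antisymm hsum (Finset.sum_nonneg hnn))
    exact this i hi
  intro i
  have := hall i (Finset.mem_univ i)
  have hDi := hD i
  have : (ωs i) ^ 2 = 0 := by
    rcases mul_eq_zero.mp this with h | h
    · exact absurd h hDi.ne'
    · exact h
  exact pow_eq_zero_iff (by norm_num) |>.mp this
end

section
/- Suppose each disutility function c_i is strictly convex and continuously differentiable (Assumption 1) and the OLC problem is feasible (Assumption 2). If (ω*, d*, P*, ψ*) is an optimal solution of the reformulated OLC problem, then d* is an optimal solution of the OLC problem; precisely, (d*, ψ*) is feasible for the OLC problem and Σ_{i∈N} c_i(d*_i) ≤ Σ_{i∈N} c_i(d_i) for every (d, θ) feasible for the OLC problem. -/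
open Finset

lemma netOut_indicator {N : Type*} [DecidableEq N]
    (E Ein : Finset (N × N)) (hEin : Ein ⊆ E) (f : N × N → ℝ) (i : N) :
    netOut E (fun e => if e ∈ Ein then f e else 0) i = netOut Ein f i := by
  unfold netOut
  have h1 : ∀ (p : N × N → Prop) (_ : DecidablePred p),
      (∑ e ∈ E.filter p, if e ∈ Ein then f e else 0) = ∑ e ∈ Ein.filter p, f e := by
    intro p _
    rw [Finset.sum_ite_mem]
    congr 1
    ext e
    simp only [Finset.mem_inter, Finset.mem_filter]
    exact ⟨fun ⟨⟨_, hp⟩, hin⟩ => ⟨hin, hp⟩, fun ⟨hin, hp⟩ => ⟨⟨hEin hin, hp⟩, hin⟩⟩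
  rw [h1 _ _, h1 _ _]

lemma olc_to_reform {N : Type*} [Fintype N] [DecidableEq N]
    (E Ein : Finset (N × N)) (hEin : Ein ⊆ E)
    (B : N × N → ℝ) (D Pin dlo dhi : N → ℝ)
    (Plo Phi : N × N → ℝ) (d θ : N → ℝ)
    (h : OLCFeasible E Ein B Pin dlo dhi Plo Phi d θ) :
    ReformFeasible E Ein B D Pin dlo dhi Plo Phi d (fun _ => 0)
      (fun e => if e ∈ Ein then B e * (θ e.1 - θ e.2) else 0) θ := by
  obtain ⟨h1, h2, h3⟩ := h
  refine ⟨fun i => ?_, h2, h1, h3⟩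
  rw [netOut_indicator E Ein hEin _ i]
  simpa using h1 i

/-- second half of Lemma 1: under Assumptions 1 and 2, if `(ω*, d*, P*, ψ*)`
is optimal for the reformulated OLC problem, then `(d*, ψ*)` is feasible for the OLC problem
and `d*` minimizes the total disutility among all OLC-feasible points. -/
theorem optimal_reform_is_optimal_OLC
    {N : Type*} [Fintype N] [DecidableEq N]
    (E Ein : Finset (N × N)) (hEin : Ein ⊆ E)
    (B : N × N → ℝ) (hB : ∀ e ∈ E, 0 < B e)
    (D Pin dlo dhi : N → ℝ) (hD : ∀ i, 0 < D i)
    (hdlim : ∀ i, dlo i ≤ dhi i)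
    (Plo Phi : N × N → ℝ) (hPlim : ∀ e ∈ E, Plo e ≤ Phi e)
    (c : N → ℝ → ℝ)
    -- Assumption 1: each cᵢ is strictly convex and continuously differentiable
    (hconv : ∀ i, StrictConvexOn ℝ Set.univ (c i))
    (hdiff : ∀ i, ContDiff ℝ 1 (c i))
    -- Assumption 2: the OLC problem is feasible
    (hfeas : ∃ d θ, OLCFeasible E Ein B Pin dlo dhi Plo Phi d θ)
    -- (ω*, d*, P*, ψ*) is an optimal solution of the reformulated OLC problem
    (ωs ds : N → ℝ) (Ps : N × N → ℝ) (ψs : N → ℝ)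
    (hfeass : ReformFeasible E Ein B D Pin dlo dhi Plo Phi ds ωs Ps ψs)
    (hopt : ∀ d ω P ψ, ReformFeasible E Ein B D Pin dlo dhi Plo Phi d ω P ψ →
      (∑ i, c i (ds i)) + (1/2) * ∑ i, D i * (ωs i) ^ 2 ≤
        (∑ i, c i (d i)) + (1/2) * ∑ i, D i * (ω i) ^ 2) :
    OLCFeasible E Ein B Pin dlo dhi Plo Phi ds ψs ∧
      ∀ d θ, OLCFeasible E Ein B Pin dlo dhi Plo Phi d θ →
        (∑ i, c i (ds i)) ≤ ∑ i, c i (d i) := by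
  obtain ⟨hs1, hs2, hs3, hs4⟩ := hfeass
  have hωnn : (0:ℝ) ≤ (1/2) * ∑ i, D i * (ωs i) ^ 2 := by
    have : (0:ℝ) ≤ ∑ i, D i * (ωs i) ^ 2 :=
      Finset.sum_nonneg fun i _ => mul_nonneg (hD i).le (sq_nonneg _)
    linarith
  refine ⟨⟨hs3, hs2, hs4⟩, fun d θ hfd => ?_⟩
  have hr := olc_to_reform E Ein hEin B D Pin dlo dhi Plo Phi d θ hfd
  have := hopt d (fun _ => 0) _ θ hr
  norm_num at this
  linarith
end

section
/- Let S = U_S Σ_S U_Sᵀ be a compact eigendecomposition of a positive semidefinite matrix S (Σ_S a positive-definite diagonal matrix, U_S with orthonormal columns), and let σ_S^min > 0 be the smallest diagonal entry of Σ_S. If α > 0 and β > 0 satisfy (2 − β − 4β⁵/α²)·(σ_S^min)² ≥ β, then the matrix T_ψ := 2β·S·S − β²·U_S U_Sᵀ − β²·S·S − (4β⁶/α²)·S·S is positive semidefinite. -/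
open Matrix

/-- if `S = U_S Σ_S U_Sᵀ` is a compact eigendecomposition of a positive
semidefinite matrix, `σ_S^min` is its smallest positive eigenvalue, and
`(2 − β − 4β⁵/α²)·(σ_S^min)² ≥ β` with `α, β > 0`, then
`T_ψ = 2β·SS − β²·U_SU_Sᵀ − β²·SS − (4β⁶/α²)·SS` is positive semidefinite. -/
theorem Tpsi_posSemidef
    {n rS : ℕ}
    (S : Matrix (Fin n) (Fin n) ℝ) (hSpsd : S.PosSemidef)
    (US : Matrix (Fin n) (Fin rS) ℝ) (SigS : Fin rS → ℝ)
    (hSigS : ∀ k, 0 < SigS k)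
    (hSdec : S = US * Matrix.diagonal SigS * USᵀ)
    (hUS : USᵀ * US = 1)
    -- σ_S^min is the smallest diagonal entry of Σ_S
    (σmin : ℝ) (hσmin_le : ∀ k, σmin ≤ SigS k) (hσmin_mem : ∃ k, SigS k = σmin)
    (α β : ℝ) (hα : 0 < α) (hβ : 0 < β)
    (hcond : β ≤ (2 - β - 4 * β ^ 5 / α ^ 2) * σmin ^ 2) :
    ((2 * β) • (S * S) - (β ^ 2) • (US * USᵀ) - (β ^ 2) • (S * S) -
      (4 * β ^ 6 / α ^ 2) • (S * S)).PosSemidef := by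
  obtain ⟨k0, hk0⟩ := hσmin_mem
  have hσminpos : 0 < σmin := hk0 ▸ hSigS k0
  set d : Fin rS → ℝ := fun k =>
    2 * β * (SigS k * SigS k) - β ^ 2 - β ^ 2 * (SigS k * SigS k) -
      4 * β ^ 6 / α ^ 2 * (SigS k * SigS k) with hd_def
  have hSS : S * S = US * Matrix.diagonal (fun k => SigS k * SigS k) * USᵀ := by
    rw [hSdec]
    calc US * Matrix.diagonal SigS * USᵀ * (US * Matrix.diagonal SigS * USᵀ)
        = US * Matrix.diagonal SigS * (USᵀ * US) * Matrix.diagonal SigS * USᵀ := by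
          simp only [Matrix.mul_assoc]
      _ = US * (Matrix.diagonal SigS * Matrix.diagonal SigS) * USᵀ := by
          rw [hUS]; simp only [Matrix.mul_one, Matrix.mul_assoc]
      _ = US * Matrix.diagonal (fun k => SigS k * SigS k) * USᵀ := by
          rw [Matrix.diagonal_mul_diagonal]
  have hUU : US * USᵀ = US * Matrix.diagonal (fun _ : Fin rS => (1:ℝ)) * USᵀ := by
    rw [Matrix.diagonal_one, Matrix.mul_one]
  have key : ((2 * β) • (S * S) - (β ^ 2) • (US * USᵀ) - (β ^ 2) • (S * S) -
      (4 * β ^ 6 / α ^ 2) • (S * S)) = US * Matrix.diagonal d * USᵀ := by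
    have e1 : ∀ (c : ℝ) (D : Fin rS → ℝ),
        c • (US * Matrix.diagonal D * USᵀ) = US * Matrix.diagonal (c • D) * USᵀ := by
      intro c D
      rw [Matrix.diagonal_smul, Matrix.mul_smul, Matrix.smul_mul]
    have e2 : ∀ (D1 D2 : Fin rS → ℝ),
        US * Matrix.diagonal D1 * USᵀ - US * Matrix.diagonal D2 * USᵀ
          = US * Matrix.diagonal (D1 - D2) * USᵀ := by
      intro D1 D2
      rw [← Matrix.sub_mul, ← Matrix.mul_sub, Matrix.diagonal_sub]
      rfl
    rw [hSS, hUU, e1, e1, e1, e1, e2, e2, e2]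
    refine congrArg (fun D => US * Matrix.diagonal D * USᵀ) ?_
    funext k
    simp only [hd_def, Pi.sub_apply, Pi.smul_apply, smul_eq_mul]
    ring
  have hα2 : 0 < α ^ 2 := by positivity
  have hcoef : 0 < 2 - β - 4 * β ^ 5 / α ^ 2 := by nlinarith [sq_nonneg σmin]
  have hd : ∀ k, 0 ≤ d k := by
    intro k
    have h1 : σmin ≤ SigS k := hσmin_le k
    have h2 : σmin ^ 2 ≤ SigS k ^ 2 := by nlinarith
    have h3 : β ≤ (2 - β - 4 * β ^ 5 / α ^ 2) * SigS k ^ 2 := by nlinarith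
    have : d k = β * ((2 - β - 4 * β ^ 5 / α ^ 2) * SigS k ^ 2 - β) := by
      simp [hd_def]; field_simp; ring
    rw [this]
    have : 0 ≤ (2 - β - 4 * β ^ 5 / α ^ 2) * SigS k ^ 2 - β := by linarith
    positivity
  rw [key]
  have hdiag : (Matrix.diagonal d).PosSemidef := Matrix.posSemidef_diagonal_iff.mpr hd
  have := hdiag.mul_mul_conjTranspose_same US
  simpa using this
end

section
/- Let 0 < u ≤ ℓ. There exists β₀ > 0 such that for every β ∈ (0, β₀) there exists α₀ > 0 such that for every α ≥ α₀ and every diagonal matrix C ∈ ℝ^{n×n} with u·I ⪯ C ⪯ ℓ·I, the 2×2 block matrix H₂(C) := [[T_d(C), F₂ᵀ + (1/(2α)) I_oᵀ A_G], [F₂ + (1/(2α)) A_Gᵀ I_o, T_P]] is positive semidefinite, where T_d(C) := (1/(2α))·(2αC + 2αF₁ − (2 + β²)I) − ((β − 1)²/(2αβ²))·I − (1/(2α))·I − (2/α)·L(C)² with L(C) := −C − F₁ + (β²/α)·I, and T_P := (1/(2α))·(2αF₃ + 2A_Gᵀ A_G − β² U_A U_Aᵀ) − (β²/(2α))·U_A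 U_Aᵀ − (2/α)·F₂ F₂ᵀ. -/
open Matrix Finset

/-- The undirected graph underlying the directed lines `ends`. -/
def incGraph {nG nL m : ℕ} (ends : Fin m → (Fin nG ⊕ Fin nL) × (Fin nG ⊕ Fin nL)) :
    SimpleGraph (Fin nG ⊕ Fin nL) :=
  SimpleGraph.fromRel (fun i j => ∃ e, ends e = (i, j))

/-- `F₁ = blockdiag(0_{|G|}, D_L⁻¹)`. -/
noncomputable def F1mat {nG nL : ℕ} (DL : Fin nL → ℝ) :
    Matrix (Fin nG ⊕ Fin nL) (Fin nG ⊕ Fin nL) ℝ :=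
  fun i j => match i, j with
  | Sum.inr a, Sum.inr b => if a = b then (DL a)⁻¹ else 0
  | _, _ => 0

/-- `F₂ = [0, A_Lᵀ D_L⁻¹]`. -/
noncomputable def F2mat {nG nL m : ℕ} (A : Matrix (Fin nG ⊕ Fin nL) (Fin m) ℝ)
    (DL : Fin nL → ℝ) : Matrix (Fin m) (Fin nG ⊕ Fin nL) ℝ :=
  fun e i => match i with
  | Sum.inr a => A (Sum.inr a) e * (DL a)⁻¹
  | _ => 0

/-- `F₃ = A_Lᵀ D_L⁻¹ A_L`. -/
noncomputable def F3mat {nG nL m : ℕ} (A : Matrix (Fin nG ⊕ Fin nL) (Fin m) ℝ)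
    (DL : Fin nL → ℝ) : Matrix (Fin m) (Fin m) ℝ :=
  fun e f => ∑ a : Fin nL, A (Sum.inr a) e * (DL a)⁻¹ * A (Sum.inr a) f

/-- `I_o = [I, 0]`, the projection onto the generator components. -/
def IoMat {nG nL : ℕ} : Matrix (Fin nG) (Fin nG ⊕ Fin nL) ℝ :=
  fun j i => if i = Sum.inl j then 1 else 0

/-- The generator-bus rows `A_G` of `A`. -/
def AGmat {nG nL m : ℕ} (A : Matrix (Fin nG ⊕ Fin nL) (Fin m) ℝ) :
    Matrix (Fin nG) (Fin m) ℝ := fun j e => A (Sum.inl j) e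

/-- Scalar assembly inequality used in the proof below. -/
lemma h2_scalar (α β u c κ KL Dmax Dimax q1 q2 q3 q4 q6 q7 q9 q10 q11 q12 S W XG : ℝ)
    (hβ : 0 < β)
    (hκ : κ = (3 + β ^ 2) / 2 + (β - 1) ^ 2 / (2 * β ^ 2))
    (hβc : β ^ 2 ≤ c / 2)
    (hαX : 3 / 2 + κ + 2 * KL + 4 * Dimax ^ 2 + 1 ≤ u * α)
    (hαS : Dmax + 4 * Dimax ^ 2 * Dmax + 1 ≤ α)
    (hα : 1 ≤ α)
    (h1 : u * q3 ≤ q1) (h3 : 0 ≤ q3)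
    (hS : q2 + 2 * q7 + q9 = S) (hS0 : 0 ≤ S)
    (h4 : q4 ≤ KL * q3)
    (h12 : q12 ≤ Dimax ^ 2 * W)
    (hW : W ≤ 2 * Dmax * S + 2 * q3)
    (hG : c * q11 ≤ q10 + W)
    (h11 : 0 ≤ q11)
    (h6 : -(XG + q10) / 2 ≤ q6) (hXG : XG ≤ q3) :
    0 ≤ 1 / (2 * α) * (2 * α * q1 + 2 * α * q2 - (2 + β ^ 2) * q3)
      - (β - 1) ^ 2 / (2 * α * β ^ 2) * q3 - 1 / (2 * α) * q3 - 2 / α * q4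
      + (q7 + 1 / (2 * α) * q6)
      + (q7 + 1 / (2 * α) * q6
        + (1 / (2 * α) * (2 * α * q9 + 2 * q10 - β ^ 2 * q11)
          - β ^ 2 / (2 * α) * q11 - 2 / α * q12)) := by
  have hα0 : (0:ℝ) < α := lt_of_lt_of_le one_pos hα
  have hα' : α ≠ 0 := ne_of_gt hα0
  have hβ' : β ≠ 0 := ne_of_gt hβ
  have hF : 0 ≤ α * q1 + α * S + q10 + q6 - κ * q3 - 2 * q4 - β ^ 2 * q11 - 2 * q12 := by
    have p1 : (3 / 2 + κ + 2 * KL + 4 * Dimax ^ 2 + 1) * q3 ≤ (u * α) * q3 :=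
      mul_le_mul_of_nonneg_right hαX h3
    have p2 : α * (u * q3) ≤ α * q1 := mul_le_mul_of_nonneg_left h1 hα0.le
    have p3 : (Dmax + 4 * Dimax ^ 2 * Dmax + 1) * S ≤ α * S :=
      mul_le_mul_of_nonneg_right hαS hS0
    have p4 : Dimax ^ 2 * W ≤ Dimax ^ 2 * (2 * Dmax * S + 2 * q3) :=
      mul_le_mul_of_nonneg_left hW (sq_nonneg _)
    have p5 : β ^ 2 * q11 ≤ (c / 2) * q11 := mul_le_mul_of_nonneg_right hβc h11
    nlinarith [p1, p2, p3, p4, p5, h12, hG, hW, h6, hXG, h4, hS0, h3]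
  have hE : 1 / (2 * α) * (2 * α * q1 + 2 * α * q2 - (2 + β ^ 2) * q3)
      - (β - 1) ^ 2 / (2 * α * β ^ 2) * q3 - 1 / (2 * α) * q3 - 2 / α * q4
      + (q7 + 1 / (2 * α) * q6)
      + (q7 + 1 / (2 * α) * q6
        + (1 / (2 * α) * (2 * α * q9 + 2 * q10 - β ^ 2 * q11)
          - β ^ 2 / (2 * α) * q11 - 2 / α * q12))
      = (α * q1 + α * S + q10 + q6 - κ * q3 - 2 * q4 - β ^ 2 * q11 - 2 * q12) / α := by
    rw [hκ, ← hS]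
    field_simp
    ring
  rw [hE]
  exact div_nonneg hF hα0.le

/-- A lower bound for `‖A y‖²` in terms of `‖U_Aᵀ y‖²` from a compact SVD. -/
lemma sv_bound {n m r : Type*} [Fintype n] [Fintype m] [Fintype r] [DecidableEq r]
    (A : Matrix n m ℝ) (VA : Matrix n r ℝ) (SigA : r → ℝ) (UA : Matrix m r ℝ)
    (hSigA : ∀ k, 0 < SigA k)
    (hAdec : A = VA * Matrix.diagonal SigA * UAᵀ)
    (hVA : VAᵀ * VA = 1) :
    ∃ c : ℝ, 0 < c ∧ ∀ w : m → ℝ,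
      c * ((UAᵀ *ᵥ w) ⬝ᵥ (UAᵀ *ᵥ w)) ≤ (A *ᵥ w) ⬝ᵥ (A *ᵥ w) := by
  classical
  have hVAnorm : ∀ q : r → ℝ, (VA *ᵥ q) ⬝ᵥ (VA *ᵥ q) = q ⬝ᵥ q := by
    intro q
    rw [dotProduct_mulVec, ← vecMul_transpose, vecMul_vecMul, hVA, vecMul_one]
  rcases isEmpty_or_nonempty r with hr | hr
  · exact ⟨1, one_pos, fun w => by
      simp [dotProduct, Finset.univ_eq_empty]
      exact Finset.sum_nonneg fun i _ => mul_self_nonneg _⟩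
  · set σ : ℝ := Finset.univ.inf' Finset.univ_nonempty SigA with hσdef
    have hσ : 0 < σ := (Finset.lt_inf'_iff _).mpr fun k _ => hSigA k
    refine ⟨σ ^ 2, by positivity, fun w => ?_⟩
    set v : r → ℝ := UAᵀ *ᵥ w with hv
    have hAv : A *ᵥ w = VA *ᵥ (Matrix.diagonal SigA *ᵥ v) := by
      rw [hAdec, ← mulVec_mulVec, ← mulVec_mulVec]
    rw [hAv, hVAnorm]
    have key : ∀ k : r, σ ^ 2 * (v k * v k)
        ≤ (Matrix.diagonal SigA *ᵥ v) k * (Matrix.diagonal SigA *ᵥ v) k := by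
      intro k
      rw [mulVec_diagonal]
      have h1 : σ ≤ SigA k := Finset.inf'_le _ (Finset.mem_univ k)
      have h2 : σ ^ 2 ≤ SigA k ^ 2 := pow_le_pow_left₀ hσ.le h1 2
      nlinarith [mul_self_nonneg (v k)]
    calc σ ^ 2 * (v ⬝ᵥ v) = ∑ k, σ ^ 2 * (v k * v k) := by
          rw [dotProduct, Finset.mul_sum]
      _ ≤ ∑ k, (Matrix.diagonal SigA *ᵥ v) k * (Matrix.diagonal SigA *ᵥ v) k :=
          Finset.sum_le_sum fun k _ => key k
      _ = (Matrix.diagonal SigA *ᵥ v) ⬝ᵥ (Matrix.diagonal SigA *ᵥ v) := rfl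

lemma dp_self_nonneg {n : Type*} [Fintype n] (v : n → ℝ) : 0 ≤ v ⬝ᵥ v :=
  Finset.sum_nonneg fun i _ => mul_self_nonneg _

set_option maxHeartbeats 2000000

/-- for all sufficiently small `β > 0` and sufficiently large `α`, the 2×2
block matrix `H₂(C)` is positive semidefinite for every diagonal `C` with `uI ⪯ C ⪯ ℓI`. -/
theorem H2_posSemidef
    {nG nL m r : ℕ}
    -- A is the node–branch incidence matrix of a connected directed graph
    (ends : Fin m → (Fin nG ⊕ Fin nL) × (Fin nG ⊕ Fin nL))
    (hloop : ∀ e, (ends e).1 ≠ (ends e).2)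
    (hconn : (incGraph ends).Connected)
    (A : Matrix (Fin nG ⊕ Fin nL) (Fin m) ℝ)
    (hA : ∀ i e, A i e =
      (if (ends e).1 = i then 1 else 0) - (if (ends e).2 = i then 1 else 0))
    -- positive damping
    (DG : Fin nG → ℝ) (DL : Fin nL → ℝ)
    (hDG : ∀ i, 0 < DG i) (hDL : ∀ i, 0 < DL i)
    -- compact SVD of A
    (VA : Matrix (Fin nG ⊕ Fin nL) (Fin r) ℝ) (SigA : Fin r → ℝ)
    (UA : Matrix (Fin m) (Fin r) ℝ)
    (hSigA : ∀ k, 0 < SigA k)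
    (hAdec : A = VA * Matrix.diagonal SigA * UAᵀ)
    (hVA : VAᵀ * VA = 1) (hUA : UAᵀ * UA = 1)
    -- the bounds 0 < u ≤ ℓ
    (u ℓ : ℝ) (hu : 0 < u) (hul : u ≤ ℓ) :
    ∃ β₀ : ℝ, 0 < β₀ ∧ ∀ β : ℝ, 0 < β → β < β₀ →
      ∃ α₀ : ℝ, 0 < α₀ ∧ ∀ α : ℝ, α₀ ≤ α →
        ∀ cvec : (Fin nG ⊕ Fin nL) → ℝ, (∀ i, u ≤ cvec i ∧ cvec i ≤ ℓ) →
          (Matrix.fromBlocks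
            -- T_d(C)
            ((1 / (2 * α)) • ((2 * α) • Matrix.diagonal cvec +
                (2 * α) • (F1mat DL : Matrix (Fin nG ⊕ Fin nL) (Fin nG ⊕ Fin nL) ℝ) -
                (2 + β ^ 2) • (1 : Matrix (Fin nG ⊕ Fin nL) (Fin nG ⊕ Fin nL) ℝ)) -
              ((β - 1) ^ 2 / (2 * α * β ^ 2)) • 1 - (1 / (2 * α)) • 1 -
              (2 / α) • ((-(Matrix.diagonal cvec) - F1mat DL + (β ^ 2 / α) • 1) *
                (-(Matrix.diagonal cvec) - F1mat DL + (β ^ 2 / α) • 1)))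
            -- F₂ᵀ + (1/(2α)) I_oᵀ A_G
            ((F2mat A DL)ᵀ + (1 / (2 * α)) • ((IoMat)ᵀ * AGmat A))
            -- F₂ + (1/(2α)) A_Gᵀ I_o
            (F2mat A DL + (1 / (2 * α)) • ((AGmat A)ᵀ * IoMat))
            -- T_P
            ((1 / (2 * α)) • ((2 * α) • F3mat A DL + (2 : ℝ) • ((AGmat A)ᵀ * AGmat A) -
                (β ^ 2) • (UA * UAᵀ)) -
              (β ^ 2 / (2 * α)) • (UA * UAᵀ) -
              (2 / α) • (F2mat A DL * (F2mat A DL)ᵀ))).PosSemidef := by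
  classical
  -- bounds on the damping coefficients
  set Dmax : ℝ := ∑ b, DL b with hDmaxdef
  have hDmax0 : 0 ≤ Dmax := Finset.sum_nonneg fun b _ => (hDL b).le
  have hDmaxle : ∀ a, DL a ≤ Dmax := fun a =>
    Finset.single_le_sum (fun b _ => (hDL b).le) (Finset.mem_univ a)
  set Dimax : ℝ := ∑ b, (DL b)⁻¹ with hDimaxdef
  have hDimax0 : 0 ≤ Dimax := Finset.sum_nonneg fun b _ => inv_nonneg.mpr (hDL b).le
  have hDimaxle : ∀ a, (DL a)⁻¹ ≤ Dimax := fun a =>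
    Finset.single_le_sum (fun b _ => inv_nonneg.mpr (hDL b).le) (Finset.mem_univ a)
  -- the singular-value lower bound
  obtain ⟨c, hc0, hcb⟩ := sv_bound A VA SigA UA hSigA hAdec hVA
  refine ⟨min 1 (Real.sqrt (c / 2)),
    lt_min one_pos (Real.sqrt_pos.mpr (by linarith)), ?_⟩
  intro β hβ0 hββ
  have hβ1 : β < 1 := lt_of_lt_of_le hββ (min_le_left _ _)
  have hβc : β ^ 2 ≤ c / 2 := by
    have h1 : β < Real.sqrt (c / 2) := lt_of_lt_of_le hββ (min_le_right _ _)
    have h2 : β * β < Real.sqrt (c / 2) * Real.sqrt (c / 2) :=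
      mul_self_lt_mul_self hβ0.le h1
    rw [Real.mul_self_sqrt (by linarith : (0:ℝ) ≤ c / 2)] at h2
    nlinarith only [h2]
  set κ : ℝ := (3 + β ^ 2) / 2 + (β - 1) ^ 2 / (2 * β ^ 2) with hκdef
  have hκ0 : 0 ≤ κ := by positivity
  set KL : ℝ := (ℓ + Dimax + 1) ^ 2 with hKLdef
  have hKL0 : 0 ≤ KL := sq_nonneg _
  refine ⟨(3 / 2 + κ + 2 * KL + 4 * Dimax ^ 2 + 1) / u +
    (Dmax + 4 * Dimax ^ 2 * Dmax + 1), by positivity, ?_⟩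
  intro α hα0 cvec hcvec
  have hdiv0 : 0 ≤ (3 / 2 + κ + 2 * KL + 4 * Dimax ^ 2 + 1) / u := by positivity
  have hDD0 : 0 ≤ Dimax ^ 2 * Dmax := mul_nonneg (sq_nonneg _) hDmax0
  have hαS : Dmax + 4 * Dimax ^ 2 * Dmax + 1 ≤ α := by linarith
  have hα1 : (1:ℝ) ≤ α := by linarith
  have hαpos : (0:ℝ) < α := lt_of_lt_of_le one_pos hα1
  have hαX : 3 / 2 + κ + 2 * KL + 4 * Dimax ^ 2 + 1 ≤ u * α := by
    have h1 : (3 / 2 + κ + 2 * KL + 4 * Dimax ^ 2 + 1) / u ≤ α := by linarith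
    calc 3 / 2 + κ + 2 * KL + 4 * Dimax ^ 2 + 1
        = ((3 / 2 + κ + 2 * KL + 4 * Dimax ^ 2 + 1) / u) * u := by field_simp
      _ ≤ α * u := mul_le_mul_of_nonneg_right h1 hu.le
      _ = u * α := mul_comm _ _
  have hIA : (IoMatᵀ * AGmat A) = ((IoMat : Matrix (Fin nG) (Fin nG ⊕ Fin nL) ℝ)ᵀ * AGmat A) := rfl
  have hAI : ((AGmat A)ᵀ * IoMat) = ((AGmat A)ᵀ * (IoMat : Matrix (Fin nG) (Fin nG ⊕ Fin nL) ℝ)) := rfl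
  refine posSemidef_iff_dotProduct_mulVec.mpr ⟨?_, ?_⟩
  · -- Hermitian
    have hF1 : (F1mat DL : Matrix (Fin nG ⊕ Fin nL) (Fin nG ⊕ Fin nL) ℝ)ᵀ = F1mat DL := by
      ext i j
      rcases i with i | a <;> rcases j with j | b <;> simp [F1mat, transpose_apply]
      rcases eq_or_ne a b with h | h
      · subst h; simp
      · simp [h, Ne.symm h]
    have hF3 : (F3mat A DL)ᵀ = F3mat A DL := by
      ext e f
      simp only [F3mat, transpose_apply]
      exact Finset.sum_congr rfl fun a _ => by ring
    rw [Matrix.IsHermitian, conjTranspose_eq_transpose_of_trivial, fromBlocks_transpose]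
    simp [transpose_sub, transpose_add, transpose_smul, transpose_mul, transpose_one,
      diagonal_transpose, transpose_neg, transpose_transpose, hF1, hF3]
    constructor <;> rw [hIA, hAI, transpose_mul, transpose_transpose]
  · -- quadratic form
    intro z
    have hstar : star z = z := funext fun i => star_trivial _
    rw [hstar]
    set x : (Fin nG ⊕ Fin nL) → ℝ := fun i => z (Sum.inl i) with hxdef
    set y : Fin m → ℝ := fun e => z (Sum.inr e) with hydef
    have hz : z = Sum.elim x y := funext fun i => by cases i <;> rfl
    rw [hz, fromBlocks_mulVec, Sum.elim_comp_inl, Sum.elim_comp_inr,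
      sumElim_dotProduct_sumElim]
    simp only [sub_mulVec, add_mulVec, smul_mulVec, one_mulVec,
      dotProduct_add, dotProduct_sub, dotProduct_smul, smul_eq_mul]
    -- auxiliary vectors
    set vL : Fin nL → ℝ := fun a => (A *ᵥ y) (Sum.inr a) with hvLdef
    have hvL : ∀ a, vL a = ∑ e, A (Sum.inr a) e * y e := fun a => rfl
    set g : Fin nG → ℝ := AGmat A *ᵥ y with hgdef
    set p : Fin r → ℝ := UAᵀ *ᵥ y with hpdef
    set XG : ℝ := ∑ j, x (Sum.inl j) * x (Sum.inl j) with hXGdef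
    set W : ℝ := ∑ a, vL a * vL a with hWdef
    set S : ℝ := ∑ a, (DL a)⁻¹ *
      ((x (Sum.inr a) + vL a) * (x (Sum.inr a) + vL a)) with hSdef
    -- component computations
    have ha1 : u * (x ⬝ᵥ x) ≤ x ⬝ᵥ Matrix.diagonal cvec *ᵥ x := by
      simp only [dotProduct, mulVec_diagonal, Finset.mul_sum]
      refine Finset.sum_le_sum fun i _ => ?_
      have h := mul_le_mul_of_nonneg_right (hcvec i).1 (mul_self_nonneg (x i))
      linarith only [h]
    have h3 : 0 ≤ x ⬝ᵥ x := dp_self_nonneg x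
    have ha2 : x ⬝ᵥ F1mat DL *ᵥ x
        = ∑ a, (DL a)⁻¹ * (x (Sum.inr a) * x (Sum.inr a)) := by
      have h1 : ∀ i, (F1mat DL *ᵥ x) i =
          Sum.elim (fun _ : Fin nG => (0:ℝ)) (fun a => (DL a)⁻¹ * x (Sum.inr a)) i := by
        rintro (j | a)
        · simp [mulVec, dotProduct, F1mat, Fintype.sum_sum_type]
        · simp [mulVec, dotProduct, F1mat, Fintype.sum_sum_type, ite_mul]
      simp only [dotProduct, h1]
      rw [Fintype.sum_sum_type]
      simp only [Sum.elim_inl, Sum.elim_inr, mul_zero, Finset.sum_const_zero, zero_add]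
      exact Finset.sum_congr rfl fun a _ => by ring
    have hgen : ∀ (a : Fin nL) (K : ℝ),
        ∑ e, y e * (A (Sum.inr a) e * K) = vL a * K := by
      intro a K
      rw [hvL a, Finset.sum_mul]
      exact Finset.sum_congr rfl fun e _ => by ring
    have hvF2 : ∀ e, (F2mat A DL *ᵥ x) e
        = ∑ a, A (Sum.inr a) e * ((DL a)⁻¹ * x (Sum.inr a)) := by
      intro e
      simp only [mulVec, dotProduct]
      rw [Fintype.sum_sum_type]
      simp only [F2mat, zero_mul, Finset.sum_const_zero, zero_add]
      exact Finset.sum_congr rfl fun a _ => by ring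
    have ha7 : y ⬝ᵥ F2mat A DL *ᵥ x = ∑ a, (DL a)⁻¹ * (vL a * x (Sum.inr a)) := by
      simp only [dotProduct]
      calc ∑ e, y e * (F2mat A DL *ᵥ x) e
          = ∑ e, ∑ a, y e * (A (Sum.inr a) e * ((DL a)⁻¹ * x (Sum.inr a))) := by
            exact Finset.sum_congr rfl fun e _ => by rw [hvF2 e, Finset.mul_sum]
        _ = ∑ a, ∑ e, y e * (A (Sum.inr a) e * ((DL a)⁻¹ * x (Sum.inr a))) :=
            Finset.sum_comm
        _ = ∑ a, (DL a)⁻¹ * (vL a * x (Sum.inr a)) := by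
            exact Finset.sum_congr rfl fun a _ => by rw [hgen]; ring
    have hvF3 : ∀ e, (F3mat A DL *ᵥ y) e
        = ∑ a, A (Sum.inr a) e * ((DL a)⁻¹ * vL a) := by
      intro e
      simp only [mulVec, dotProduct, F3mat, Finset.sum_mul]
      rw [Finset.sum_comm]
      refine Finset.sum_congr rfl fun a _ => ?_
      rw [hvL a, Finset.mul_sum, Finset.mul_sum]
      exact Finset.sum_congr rfl fun f _ => by ring
    have ha9 : y ⬝ᵥ F3mat A DL *ᵥ y = ∑ a, (DL a)⁻¹ * (vL a * vL a) := by
      simp only [dotProduct]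
      calc ∑ e, y e * (F3mat A DL *ᵥ y) e
          = ∑ e, ∑ a, y e * (A (Sum.inr a) e * ((DL a)⁻¹ * vL a)) := by
            exact Finset.sum_congr rfl fun e _ => by rw [hvF3 e, Finset.mul_sum]
        _ = ∑ a, ∑ e, y e * (A (Sum.inr a) e * ((DL a)⁻¹ * vL a)) := Finset.sum_comm
        _ = ∑ a, (DL a)⁻¹ * (vL a * vL a) := by
            exact Finset.sum_congr rfl fun a _ => by rw [hgen]; ring
    have hSe : x ⬝ᵥ F1mat DL *ᵥ x + 2 * (y ⬝ᵥ F2mat A DL *ᵥ x)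
        + y ⬝ᵥ F3mat A DL *ᵥ y = S := by
      rw [ha2, ha7, ha9, hSdef, Finset.mul_sum, ← Finset.sum_add_distrib,
        ← Finset.sum_add_distrib]
      exact Finset.sum_congr rfl fun a _ => by ring
    have hS0 : 0 ≤ S := by
      rw [hSdef]
      exact Finset.sum_nonneg fun a _ =>
        mul_nonneg (inv_nonneg.mpr (hDL a).le) (mul_self_nonneg _)
    -- the L-block
    have hL : (-(Matrix.diagonal cvec) - F1mat DL + (β ^ 2 / α) • (1 : Matrix _ _ ℝ))
        = Matrix.diagonal (fun i => β ^ 2 / α - cvec i -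
            Sum.elim (fun _ : Fin nG => (0:ℝ)) (fun a => (DL a)⁻¹) i) := by
      ext i j
      rcases eq_or_ne i j with h | h
      · subst h
        rcases i with j0 | a <;>
          simp [F1mat, Matrix.sub_apply, Matrix.add_apply, Matrix.neg_apply,
            Matrix.smul_apply, smul_eq_mul, Matrix.one_apply_eq,
            Matrix.diagonal_apply_eq] <;> ring
      · have h1 : (1 : Matrix (Fin nG ⊕ Fin nL) (Fin nG ⊕ Fin nL) ℝ) i j = 0 :=
          Matrix.one_apply_ne h
        have h2 : Matrix.diagonal cvec i j = 0 := Matrix.diagonal_apply_ne _ h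
        have h3 : Matrix.diagonal (fun i => β ^ 2 / α - cvec i -
            Sum.elim (fun _ : Fin nG => (0:ℝ)) (fun a => (DL a)⁻¹) i) i j = 0 :=
          Matrix.diagonal_apply_ne _ h
        have h4 : F1mat DL i j = 0 := by
          rcases i with i0 | a <;> rcases j with j0 | b
          · simp [F1mat]
          · simp [F1mat]
          · simp [F1mat]
          · have hab : a ≠ b := fun hab => h (by rw [hab])
            simp [F1mat, hab]
        simp only [Matrix.sub_apply, Matrix.add_apply, Matrix.neg_apply,
          Matrix.smul_apply, smul_eq_mul, h1, h2, h3, h4]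
        ring
    have ha4 : x ⬝ᵥ ((-(Matrix.diagonal cvec) - F1mat DL + (β ^ 2 / α) • 1) *
        (-(Matrix.diagonal cvec) - F1mat DL + (β ^ 2 / α) • 1)) *ᵥ x
        = ∑ i, ((β ^ 2 / α - cvec i - Sum.elim (fun _ : Fin nG => (0:ℝ))
            (fun a => (DL a)⁻¹) i) * x i) *
          ((β ^ 2 / α - cvec i - Sum.elim (fun _ : Fin nG => (0:ℝ))
            (fun a => (DL a)⁻¹) i) * x i) := by
      rw [hL, Matrix.diagonal_mul_diagonal]
      simp only [dotProduct, mulVec_diagonal, Pi.mul_apply]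
      exact Finset.sum_congr rfl fun i _ => by ring
    have h4 : x ⬝ᵥ ((-(Matrix.diagonal cvec) - F1mat DL + (β ^ 2 / α) • 1) *
        (-(Matrix.diagonal cvec) - F1mat DL + (β ^ 2 / α) • 1)) *ᵥ x
        ≤ KL * (x ⬝ᵥ x) := by
      rw [ha4]
      have hptw : ∀ i, ((β ^ 2 / α - cvec i - Sum.elim (fun _ : Fin nG => (0:ℝ))
            (fun a => (DL a)⁻¹) i) * x i) *
          ((β ^ 2 / α - cvec i - Sum.elim (fun _ : Fin nG => (0:ℝ))
            (fun a => (DL a)⁻¹) i) * x i) ≤ KL * (x i * x i) := by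
        intro i
        set d : ℝ := β ^ 2 / α - cvec i -
          Sum.elim (fun _ : Fin nG => (0:ℝ)) (fun a => (DL a)⁻¹) i with hd
        have hfI0 : 0 ≤ Sum.elim (fun _ : Fin nG => (0:ℝ)) (fun a => (DL a)⁻¹) i := by
          rcases i with j | a
          · simp
          · simp only [Sum.elim_inr]; exact inv_nonneg.mpr (hDL a).le
        have hfIle : Sum.elim (fun _ : Fin nG => (0:ℝ)) (fun a => (DL a)⁻¹) i ≤ Dimax := by
          rcases i with j | a
          · simpa using hDimax0
          · simpa using hDimaxle a
        have hβα : β ^ 2 / α ≤ 1 := by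
          rw [div_le_one hαpos]
          have h := pow_le_one₀ hβ0.le hβ1.le (n := 2)
          linarith only [h, hα1]
        have hβα0 : 0 ≤ β ^ 2 / α := by positivity
        have hd1 : d ≤ ℓ + Dimax + 1 := by
          have h := (hcvec i).1
          rw [hd]
          linarith only [h, hβα, hfI0, hu, hul, hDimax0]
        have hd2 : -(ℓ + Dimax + 1) ≤ d := by
          have h := (hcvec i).2
          rw [hd]
          linarith only [h, hβα0, hfIle]
        have hsq : d ^ 2 ≤ (ℓ + Dimax + 1) ^ 2 := sq_le_sq' hd2 hd1
        calc (d * x i) * (d * x i) = d ^ 2 * (x i * x i) := by ring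
          _ ≤ (ℓ + Dimax + 1) ^ 2 * (x i * x i) :=
            mul_le_mul_of_nonneg_right hsq (mul_self_nonneg _)
          _ = KL * (x i * x i) := by rw [hKLdef]
      calc (∑ i, _) ≤ ∑ i, KL * (x i * x i) := Finset.sum_le_sum fun i _ => hptw i
        _ = KL * (x ⬝ᵥ x) := by rw [dotProduct, Finset.mul_sum]
    -- F₂F₂ᵀ block
    have hf2t : ∀ i, ((F2mat A DL)ᵀ *ᵥ y) i =
        Sum.elim (fun _ : Fin nG => (0:ℝ)) (fun a => (DL a)⁻¹ * vL a) i := by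
      rintro (j | a)
      · simp [mulVec, dotProduct, F2mat, transpose_apply]
      · simp only [mulVec, dotProduct, transpose_apply, F2mat, Sum.elim_inr]
        rw [hvL a, Finset.mul_sum]
        exact Finset.sum_congr rfl fun e _ => by ring
    have ha12 : y ⬝ᵥ (F2mat A DL * (F2mat A DL)ᵀ) *ᵥ y
        = ∑ a, ((DL a)⁻¹ * vL a) * ((DL a)⁻¹ * vL a) := by
      rw [← mulVec_mulVec, dotProduct_mulVec, ← mulVec_transpose]
      simp only [dotProduct, hf2t]
      rw [Fintype.sum_sum_type]
      simp only [Sum.elim_inl, Sum.elim_inr, mul_zero, zero_mul,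
        Finset.sum_const_zero, zero_add]
    have h12 : y ⬝ᵥ (F2mat A DL * (F2mat A DL)ᵀ) *ᵥ y ≤ Dimax ^ 2 * W := by
      rw [ha12]
      have hptw : ∀ a : Fin nL, ((DL a)⁻¹ * vL a) * ((DL a)⁻¹ * vL a)
          ≤ Dimax ^ 2 * (vL a * vL a) := by
        intro a
        have h2 : (DL a)⁻¹ ^ 2 ≤ Dimax ^ 2 :=
          pow_le_pow_left₀ (inv_nonneg.mpr (hDL a).le) (hDimaxle a) 2
        calc ((DL a)⁻¹ * vL a) * ((DL a)⁻¹ * vL a)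
            = (DL a)⁻¹ ^ 2 * (vL a * vL a) := by ring
          _ ≤ Dimax ^ 2 * (vL a * vL a) :=
            mul_le_mul_of_nonneg_right h2 (mul_self_nonneg _)
      calc (∑ a, _) ≤ ∑ a, Dimax ^ 2 * (vL a * vL a) :=
            Finset.sum_le_sum fun a _ => hptw a
        _ = Dimax ^ 2 * W := by rw [hWdef, Finset.mul_sum]
    -- W bound
    have hxr : ∑ a, x (Sum.inr a) * x (Sum.inr a) ≤ x ⬝ᵥ x := by
      simp only [dotProduct]
      rw [Fintype.sum_sum_type]
      have h := Finset.sum_nonneg fun (j : Fin nG) (_ : j ∈ Finset.univ) =>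
        mul_self_nonneg (x (Sum.inl j))
      linarith
    have hW : W ≤ 2 * Dmax * S + 2 * (x ⬝ᵥ x) := by
      have step : W ≤ ∑ a, ((2 * Dmax) * ((DL a)⁻¹ *
          ((x (Sum.inr a) + vL a) * (x (Sum.inr a) + vL a)))
          + 2 * (x (Sum.inr a) * x (Sum.inr a))) := by
        rw [hWdef]
        refine Finset.sum_le_sum fun a _ => ?_
        have hDLa := hDL a
        have hDd : DL a * ((DL a)⁻¹ *
            ((x (Sum.inr a) + vL a) * (x (Sum.inr a) + vL a)))
            = (x (Sum.inr a) + vL a) * (x (Sum.inr a) + vL a) := by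
          field_simp
        have hsq : 0 ≤ (DL a)⁻¹ * ((x (Sum.inr a) + vL a) * (x (Sum.inr a) + vL a)) :=
          mul_nonneg (inv_nonneg.mpr hDLa.le) (mul_self_nonneg _)
        have hDD : DL a * ((DL a)⁻¹ *
            ((x (Sum.inr a) + vL a) * (x (Sum.inr a) + vL a)))
            ≤ Dmax * ((DL a)⁻¹ * ((x (Sum.inr a) + vL a) * (x (Sum.inr a) + vL a))) :=
          mul_le_mul_of_nonneg_right (hDmaxle a) hsq
        linarith only [hDd, hDD,
          mul_self_nonneg ((x (Sum.inr a) + vL a) + x (Sum.inr a))]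
      have hsum : ∑ a, ((2 * Dmax) * ((DL a)⁻¹ *
          ((x (Sum.inr a) + vL a) * (x (Sum.inr a) + vL a)))
          + 2 * (x (Sum.inr a) * x (Sum.inr a)))
          = 2 * Dmax * S + 2 * ∑ a, x (Sum.inr a) * x (Sum.inr a) := by
        rw [Finset.sum_add_distrib, ← Finset.mul_sum, ← Finset.mul_sum, ← hSdef]
      rw [hsum] at step
      linarith
    -- the A_G bound
    have hsplitA : (A *ᵥ y) ⬝ᵥ (A *ᵥ y) = g ⬝ᵥ g + W := by
      simp only [dotProduct, hgdef, hWdef, hvLdef]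
      rw [Fintype.sum_sum_type]
      rfl
    have hG : c * (p ⬝ᵥ p) ≤ g ⬝ᵥ g + W := by
      rw [← hsplitA, hpdef]
      exact hcb y
    have h11 : 0 ≤ p ⬝ᵥ p := dp_self_nonneg p
    -- the cross term
    have hIo : IoMat *ᵥ x = fun j => x (Sum.inl j) := by
      funext j
      simp [IoMat, mulVec, dotProduct, ite_mul]
    have ha6 : x ⬝ᵥ (IoMatᵀ * AGmat A) *ᵥ y = ∑ j, x (Sum.inl j) * g j := by
      rw [hIA, ← mulVec_mulVec, dotProduct_mulVec, vecMul_transpose, hIo, ← hgdef]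
      rfl
    have h6 : -(XG + g ⬝ᵥ g) / 2 ≤ ∑ j, x (Sum.inl j) * g j := by
      have hnn : (0:ℝ) ≤ ∑ j, (x (Sum.inl j) + g j) * (x (Sum.inl j) + g j) :=
        Finset.sum_nonneg fun j _ => mul_self_nonneg _
      have hexp : ∑ j, (x (Sum.inl j) + g j) * (x (Sum.inl j) + g j)
          = XG + 2 * (∑ j, x (Sum.inl j) * g j) + g ⬝ᵥ g := by
        simp only [dotProduct, hXGdef, Finset.mul_sum]
        rw [← Finset.sum_add_distrib, ← Finset.sum_add_distrib]
        exact Finset.sum_congr rfl fun j _ => by ring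
      linarith
    have hXGle : XG ≤ x ⬝ᵥ x := by
      simp only [dotProduct, hXGdef]
      rw [Fintype.sum_sum_type]
      have h := Finset.sum_nonneg fun (a : Fin nL) (_ : a ∈ Finset.univ) =>
        mul_self_nonneg (x (Sum.inr a))
      linarith
    -- bridge matrix quadratic forms
    have ha10 : y ⬝ᵥ ((AGmat A)ᵀ * AGmat A) *ᵥ y = g ⬝ᵥ g := by
      rw [← mulVec_mulVec, dotProduct_mulVec, vecMul_transpose, hgdef]
    have ha11 : y ⬝ᵥ (UA * UAᵀ) *ᵥ y = p ⬝ᵥ p := by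
      rw [← mulVec_mulVec, dotProduct_mulVec, ← mulVec_transpose, hpdef]
    have hq5eq : x ⬝ᵥ (F2mat A DL)ᵀ *ᵥ y = y ⬝ᵥ F2mat A DL *ᵥ x := by
      rw [dotProduct_mulVec, vecMul_transpose, dotProduct_comm]
    have hq8eq : y ⬝ᵥ ((AGmat A)ᵀ * IoMat) *ᵥ x = x ⬝ᵥ (IoMatᵀ * AGmat A) *ᵥ y := by
      have h : (AGmat A)ᵀ * (IoMat (nG := nG) (nL := nL)) = (IoMatᵀ * AGmat A)ᵀ := by
        rw [hIA, transpose_mul, transpose_transpose]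
      rw [hAI, h, dotProduct_mulVec, vecMul_transpose, dotProduct_comm]
    rw [hq5eq, hq8eq]
    have hG' : c * (y ⬝ᵥ (UA * UAᵀ) *ᵥ y) ≤ y ⬝ᵥ ((AGmat A)ᵀ * AGmat A) *ᵥ y + W := by
      rw [ha10, ha11]; exact hG
    have h11' : 0 ≤ y ⬝ᵥ (UA * UAᵀ) *ᵥ y := by rw [ha11]; exact h11
    have h6' : -(XG + y ⬝ᵥ ((AGmat A)ᵀ * AGmat A) *ᵥ y) / 2
        ≤ x ⬝ᵥ (IoMatᵀ * AGmat A) *ᵥ y := by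
      rw [ha10, ha6]; exact h6
    have final := h2_scalar α β u c κ KL Dmax Dimax
      (x ⬝ᵥ Matrix.diagonal cvec *ᵥ x) (x ⬝ᵥ F1mat DL *ᵥ x) (x ⬝ᵥ x)
      (x ⬝ᵥ ((-(Matrix.diagonal cvec) - F1mat DL + (β ^ 2 / α) • 1) *
        (-(Matrix.diagonal cvec) - F1mat DL + (β ^ 2 / α) • 1)) *ᵥ x)
      (x ⬝ᵥ (IoMatᵀ * AGmat A) *ᵥ y) (y ⬝ᵥ F2mat A DL *ᵥ x) (y ⬝ᵥ F3mat A DL *ᵥ y)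
      (y ⬝ᵥ ((AGmat A)ᵀ * AGmat A) *ᵥ y) (y ⬝ᵥ (UA * UAᵀ) *ᵥ y)
      (y ⬝ᵥ (F2mat A DL * (F2mat A DL)ᵀ) *ᵥ y)
      S W XG hβ0 hκdef hβc hαX hαS hα1 ha1 h3 hSe hS0 h4 h12 hW hG' h11' h6' hXGle
    exact final
end
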